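/- Let o be the centre of the permutahedron Πⁿ and let x ∈ F_{ω₁}, y ∈ F_{ω₂} be points of non-intersecting facets (i.e., ω₁ ⊄ ω₂ and ω₂ ⊄ ω₁). Let ξ = x − o and η = y − o. Then the cosine of the angle between ξ and η satisfies (ξ,η)/(|ξ||η|) ≤ 1 − 12/(n(n+1)(n+2)). -/

import Mathlib

open scoped BigOperators

/-- The vertices of the permutahedron `Πⁿ ⊂ ℝ^{n+1}`. -/
def permVerts (n : ℕ) : Set (Fin (n + 1) → ℝ) :=
  {v | ∃ σ : Equiv.Perm (Fin (n + 1)), ∀ i, v i = ((σ i : ℕ) : ℝ) + 1}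

/-- The permutahedron `Πⁿ`. -/
def permutahedron (n : ℕ) : Set (Fin (n + 1) → ℝ) := convexHull ℝ (permVerts n)

/-- The value `∑_{j = n-|ω|+2}^{n+1} j` appearing in the equation of the facet `F_ω`. -/
def facetLevel (n k : ℕ) : ℝ := ∑ j ∈ Finset.Ioc (n + 1 - k) (n + 1), (j : ℝ)

/-- The facet `F_ω` of the permutahedron. -/
def permFacet (n : ℕ) (ω : Finset (Fin (n + 1))) : Set (Fin (n + 1) → ℝ) :=
  {x ∈ permutahedron n | ∑ i ∈ ω, x i = facetLevel n ω.card}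


lemma subset_sum_le_aux (N k : ℕ) (S : Finset ℕ) (hS : S ⊆ Finset.Ioc 0 N)
    (hcard : S.card = k) :
    ∑ s ∈ S, s + (S \ Finset.Ioc (N - k) N).card ≤ ∑ j ∈ Finset.Ioc (N - k) N, j := by
  set T := Finset.Ioc (N - k) N with hT
  have hkN : k ≤ N := by
    have := Finset.card_le_card hS
    simpa [hcard, Nat.card_Ioc] using this
  have hTcard : T.card = k := by simp [hT, Nat.card_Ioc]; omega
  have hm : (S \ T).card = (T \ S).card := by
    have h1 := Finset.card_inter_add_card_sdiff S T
    have h2 := Finset.card_inter_add_card_sdiff T S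
    rw [Finset.inter_comm] at h2
    omega
  set m := (S \ T).card with hmdef
  have hSsplit := Finset.sum_inter_add_sum_sdiff S T (id)
  have hTsplit := Finset.sum_inter_add_sum_sdiff T S (id)
  have hub : ∑ s ∈ S \ T, s ≤ m * (N - k) := by
    have := Finset.sum_le_card_nsmul (S \ T) id (N - k) ?_
    · simpa [smul_eq_mul] using this
    · intro s hs
      have hs1 := hS (Finset.mem_sdiff.1 hs).1
      have hs2 := (Finset.mem_sdiff.1 hs).2
      simp [hT, Finset.mem_Ioc] at hs1 hs2 ⊢
      omega
  have hlb : m * (N - k + 1) ≤ ∑ t ∈ T \ S, t := by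
    have := Finset.card_nsmul_le_sum (T \ S) id (N - k + 1) ?_
    · simpa [smul_eq_mul, ← hm] using this
    · intro t ht
      have ht1 := (Finset.mem_sdiff.1 ht).1
      simp [hT, Finset.mem_Ioc] at ht1 ⊢
      omega
  have hintcomm : ∑ s ∈ S ∩ T, (s : ℕ) = ∑ s ∈ T ∩ S, s := by rw [Finset.inter_comm]
  have hring : m * (N - k + 1) = m * (N - k) + m := by ring
  simp only [id] at hSsplit hTsplit hub hlb
  omega

lemma subset_sum_eq_case (N k : ℕ) (S : Finset ℕ) (hS : S ⊆ Finset.Ioc 0 N)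
    (hcard : S.card = k) (heq : ∑ s ∈ S, s = ∑ j ∈ Finset.Ioc (N - k) N, j) :
    S = Finset.Ioc (N - k) N := by
  have h := subset_sum_le_aux N k S hS hcard
  have hm0 : (S \ Finset.Ioc (N - k) N).card = 0 := by omega
  have hsub : S ⊆ Finset.Ioc (N - k) N := by
    rw [← Finset.sdiff_eq_empty_iff_subset]
    exact Finset.card_eq_zero.1 hm0
  apply Finset.eq_of_subset_of_card_le hsub
  have hkN : k ≤ N := by
    have := Finset.card_le_card hS
    simpa [hcard, Nat.card_Ioc] using this
  simp [Nat.card_Ioc, hcard]; omega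


section Verts
variable {n : ℕ} (σ : Equiv.Perm (Fin (n + 1))) (ω : Finset (Fin (n + 1)))

lemma img_props :
    (ω.image (fun i => (σ i : ℕ) + 1)) ⊆ Finset.Ioc 0 (n + 1) ∧
    (ω.image (fun i => (σ i : ℕ) + 1)).card = ω.card ∧
    ∑ s ∈ ω.image (fun i => (σ i : ℕ) + 1), s = ∑ i ∈ ω, ((σ i : ℕ) + 1) := by
  have hinj : Set.InjOn (fun i => (σ i : ℕ) + 1) ω := by
    intro a _ b _ hab
    simp only [add_left_inj] at hab
    exact σ.injective (Fin.val_injective hab)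
  refine ⟨?_, Finset.card_image_of_injOn hinj, Finset.sum_image ?_⟩
  · intro s hs
    simp only [Finset.mem_image] at hs
    obtain ⟨i, _, rfl⟩ := hs
    simp [Finset.mem_Ioc, Nat.lt_succ_iff]
    exact Fin.is_le _
  · intro a ha b hb hab; exact hinj ha hb hab

lemma vert_sum_le : ∑ i ∈ ω, (((σ i : ℕ) : ℝ) + 1) ≤ facetLevel n ω.card := by
  obtain ⟨h1, h2, h3⟩ := img_props σ ω
  have key := subset_sum_le_aux (n + 1) ω.card _ h1 h2
  have : ∑ i ∈ ω, ((σ i : ℕ) + 1) ≤ ∑ j ∈ Finset.Ioc (n + 1 - ω.card) (n + 1), j := by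
    omega
  calc ∑ i ∈ ω, (((σ i : ℕ) : ℝ) + 1)
      = ((∑ i ∈ ω, ((σ i : ℕ) + 1) : ℕ) : ℝ) := by push_cast; ring
    _ ≤ ((∑ j ∈ Finset.Ioc (n + 1 - ω.card) (n + 1), j : ℕ) : ℝ) := by exact_mod_cast this
    _ = facetLevel n ω.card := by rw [facetLevel]; push_cast; ring

lemma vert_eq_sep (heq : ∑ i ∈ ω, (((σ i : ℕ) : ℝ) + 1) = facetLevel n ω.card)
    {j l : Fin (n + 1)} (hj : j ∈ ω) (hl : l ∉ ω) :
    (((σ l : ℕ) : ℝ) + 1) + 1 ≤ ((σ j : ℕ) : ℝ) + 1 := by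
  obtain ⟨h1, h2, h3⟩ := img_props σ ω
  have heqn : ∑ s ∈ ω.image (fun i => (σ i : ℕ) + 1), s
      = ∑ j ∈ Finset.Ioc (n + 1 - ω.card) (n + 1), j := by
    have : ((∑ i ∈ ω, ((σ i : ℕ) + 1) : ℕ) : ℝ)
        = ((∑ j ∈ Finset.Ioc (n + 1 - ω.card) (n + 1), j : ℕ) : ℝ) := by
      have e1 : ((∑ i ∈ ω, ((σ i : ℕ) + 1) : ℕ) : ℝ) = ∑ i ∈ ω, (((σ i : ℕ) : ℝ) + 1) := by
        push_cast; ring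
      have e2 : ((∑ j ∈ Finset.Ioc (n + 1 - ω.card) (n + 1), j : ℕ) : ℝ)
          = facetLevel n ω.card := by rw [facetLevel]; push_cast; ring
      rw [e1, e2, heq]
    exact h3.trans (Nat.cast_injective this)
  have hST := subset_sum_eq_case (n + 1) ω.card _ h1 h2 heqn
  have hjmem : ((σ j : ℕ) + 1) ∈ Finset.Ioc (n + 1 - ω.card) (n + 1) := by
    rw [← hST]; exact Finset.mem_image_of_mem _ hj
  have hlmem : ((σ l : ℕ) + 1) ∉ Finset.Ioc (n + 1 - ω.card) (n + 1) := by
    rw [← hST]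
    simp only [Finset.mem_image, not_exists]
    rintro i ⟨hi, hil⟩
    exact hl (by rwa [show i = l from σ.injective (Fin.val_injective (by omega))] at hi)
  have hlle : (σ l : ℕ) + 1 ≤ n + 1 := Nat.succ_le_succ (Fin.is_le _)
  simp only [Finset.mem_Ioc] at hjmem hlmem
  have : (σ l : ℕ) + 1 + 1 ≤ (σ j : ℕ) + 1 := by omega
  exact_mod_cast this

end Verts

lemma sum_range_sq_shift (m : ℕ) (c : ℝ) :
    ∑ i ∈ Finset.range m, ((i : ℝ) + 1 - c) ^ 2
      = m * (m + 1) * (2 * m + 1) / 6 - c * m * (m + 1) + m * c ^ 2 := by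
  induction m with
  | zero => simp
  | succ m ih => rw [Finset.sum_range_succ, ih]; push_cast; ring

lemma vert_norm (n : ℕ) (σ : Equiv.Perm (Fin (n + 1))) :
    ∑ i : Fin (n + 1), ((((σ i : ℕ) : ℝ) + 1) - ((n : ℝ) + 2) / 2) ^ 2
      = (n : ℝ) * ((n : ℝ) + 1) * ((n : ℝ) + 2) / 12 := by
  have h1 : ∑ i : Fin (n + 1), ((((σ i : ℕ) : ℝ) + 1) - ((n : ℝ) + 2) / 2) ^ 2
      = ∑ i : Fin (n + 1), ((((i : ℕ) : ℝ) + 1) - ((n : ℝ) + 2) / 2) ^ 2 :=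
    Equiv.sum_comp σ (fun i => ((((i : ℕ) : ℝ) + 1) - ((n : ℝ) + 2) / 2) ^ 2)
  rw [h1, Fin.sum_univ_eq_sum_range (fun i => (((i : ℕ) : ℝ) + 1 - ((n : ℝ) + 2) / 2) ^ 2),
    sum_range_sq_shift]
  push_cast; ring

lemma perm_norm_bound (n : ℕ) (x : Fin (n + 1) → ℝ) (hx : x ∈ permutahedron n) :
    ∑ i, (x i - ((n : ℝ) + 2) / 2) ^ 2 ≤ (n : ℝ) * ((n : ℝ) + 1) * ((n : ℝ) + 2) / 12 := by
  set c : ℝ := ((n : ℝ) + 2) / 2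
  set R2 : ℝ := (n : ℝ) * ((n : ℝ) + 1) * ((n : ℝ) + 2) / 12
  have hconv : ConvexOn ℝ Set.univ (fun z : Fin (n + 1) → ℝ => ∑ i, (z i - c) ^ 2) := by
    refine ⟨convex_univ, ?_⟩
    intro p _ q _ a b ha hb hab
    simp only [Pi.add_apply, Pi.smul_apply, smul_eq_mul]
    rw [Finset.mul_sum, Finset.mul_sum, ← Finset.sum_add_distrib]
    apply Finset.sum_le_sum
    intro i _
    have hb' : b = 1 - a := by linarith
    subst hb'
    nlinarith [mul_nonneg (mul_nonneg ha hb) (sq_nonneg (p i - q i))]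
  have hK : Convex ℝ {z : Fin (n + 1) → ℝ | z ∈ Set.univ ∧ ∑ i, (z i - c) ^ 2 ≤ R2} :=
    hconv.convex_le R2
  have hsub : permVerts n ⊆ {z : Fin (n + 1) → ℝ | z ∈ Set.univ ∧ ∑ i, (z i - c) ^ 2 ≤ R2} := by
    rintro v ⟨σ, hσ⟩
    refine ⟨trivial, ?_⟩
    have : ∑ i, (v i - c) ^ 2 = ∑ i : Fin (n + 1), ((((σ i : ℕ) : ℝ) + 1) - c) ^ 2 := by
      apply Finset.sum_congr rfl; intro i _; rw [hσ i]
    rw [this, vert_norm]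
  exact (convexHull_min hsub hK hx).2

lemma facet_sep {n : ℕ} {ω : Finset (Fin (n + 1))} {x : Fin (n + 1) → ℝ}
    (hx : x ∈ permFacet n ω) {j l : Fin (n + 1)} (hj : j ∈ ω) (hl : l ∉ ω) :
    x l + 1 ≤ x j := by
  obtain ⟨hxP, hxF⟩ := hx
  rw [permutahedron, convexHull_eq] at hxP
  obtain ⟨ι, t, w, z, hw0, hw1, hz, hcm⟩ := hxP
  rw [Finset.centerMass_eq_of_sum_1 t z hw1] at hcm
  have hcoord : ∀ i0 : Fin (n + 1), x i0 = ∑ i ∈ t, w i * z i i0 := by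
    intro i0
    rw [← hcm]
    simp [Finset.sum_apply]
  set L : ℝ := facetLevel n ω.card with hL
  have hale : ∀ i ∈ t, ∑ m ∈ ω, z i m ≤ L := by
    intro i hi
    obtain ⟨σ, hσ⟩ := hz i hi
    have : ∑ m ∈ ω, z i m = ∑ m ∈ ω, (((σ m : ℕ) : ℝ) + 1) :=
      Finset.sum_congr rfl (fun m _ => hσ m)
    rw [this]
    exact vert_sum_le σ ω
  have hswap : ∑ i ∈ t, w i * (∑ m ∈ ω, z i m) = L := by
    have : ∑ i ∈ t, w i * (∑ m ∈ ω, z i m) = ∑ m ∈ ω, ∑ i ∈ t, w i * z i m := by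
      rw [Finset.sum_comm]
      exact Finset.sum_congr rfl (fun i _ => Finset.mul_sum _ _ _)
    rw [this, ← hxF]
    exact Finset.sum_congr rfl (fun m _ => (hcoord m).symm)
  have hzero : ∀ i ∈ t, w i * (L - ∑ m ∈ ω, z i m) = 0 := by
    have hsum0 : ∑ i ∈ t, w i * (L - ∑ m ∈ ω, z i m) = 0 := by
      have : ∑ i ∈ t, w i * (L - ∑ m ∈ ω, z i m)
          = (∑ i ∈ t, w i) * L - ∑ i ∈ t, w i * (∑ m ∈ ω, z i m) := by
        rw [Finset.sum_mul, ← Finset.sum_sub_distrib]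
        exact Finset.sum_congr rfl (fun i _ => by ring)
      rw [this, hw1, hswap]; ring
    have hnn : ∀ i ∈ t, 0 ≤ w i * (L - ∑ m ∈ ω, z i m) := fun i hi =>
      mul_nonneg (hw0 i hi) (by linarith [hale i hi])
    exact (Finset.sum_eq_zero_iff_of_nonneg hnn).1 hsum0
  have hterm : ∀ i ∈ t, w i * 1 ≤ w i * (z i j - z i l) := by
    intro i hi
    rcases eq_or_lt_of_le (hw0 i hi) with h0 | hpos
    · rw [← h0]; simp
    · have haL : ∑ m ∈ ω, z i m = L := by
        have := hzero i hi
        rcases mul_eq_zero.1 this with h | h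
        · exact absurd h (ne_of_gt hpos)
        · linarith
      obtain ⟨σ, hσ⟩ := hz i hi
      have heq : ∑ m ∈ ω, (((σ m : ℕ) : ℝ) + 1) = facetLevel n ω.card := by
        rw [← hL, ← haL]; exact Finset.sum_congr rfl (fun m _ => (hσ m).symm)
      have hsep := vert_eq_sep σ ω heq hj hl
      rw [hσ j, hσ l]
      have : (1 : ℝ) ≤ (((σ j : ℕ) : ℝ) + 1) - (((σ l : ℕ) : ℝ) + 1) := by linarith
      nlinarith
  have hge : (1 : ℝ) ≤ ∑ i ∈ t, w i * (z i j - z i l) := by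
    have h1 : ∑ i ∈ t, w i * (1 : ℝ) = 1 := by simp only [mul_one]; exact hw1
    rw [← h1]
    exact Finset.sum_le_sum hterm
  have hdiff : x j - x l = ∑ i ∈ t, w i * (z i j - z i l) := by
    rw [hcoord j, hcoord l, ← Finset.sum_sub_distrib]
    exact Finset.sum_congr rfl (fun i _ => by ring)
  linarith

lemma cs_sqrt {m : ℕ} (f g : Fin m → ℝ) :
    ∑ i, f i * g i ≤ Real.sqrt (∑ i, f i ^ 2) * Real.sqrt (∑ i, g i ^ 2) := by
  have h := Finset.sum_mul_sq_le_sq_mul_sq Finset.univ f g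
  calc ∑ i, f i * g i ≤ |∑ i, f i * g i| := le_abs_self _
    _ = Real.sqrt ((∑ i, f i * g i) ^ 2) := (Real.sqrt_sq_eq_abs _).symm
    _ ≤ Real.sqrt ((∑ i, f i ^ 2) * ∑ i, g i ^ 2) := Real.sqrt_le_sqrt h
    _ = Real.sqrt (∑ i, f i ^ 2) * Real.sqrt (∑ i, g i ^ 2) :=
        Real.sqrt_mul (Finset.sum_nonneg fun i _ => sq_nonneg _) _

/-- If `x ∈ F_{ω₁}` and `y ∈ F_{ω₂}` lie on non-intersecting facets of `Πⁿ` (neither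
`ω₁ ⊆ ω₂` nor `ω₂ ⊆ ω₁`), and `ξ = x − o`, `η = y − o` with `o` the centre of `Πⁿ`,
then `(ξ,η) ≤ (1 − 12/(n(n+1)(n+2)))·|ξ||η|`, i.e. the cosine of the angle between
`ξ` and `η` is at most `1 − 12/(n(n+1)(n+2))`. -/
theorem permFacet_angle_bound (n : ℕ)
    (ω₁ ω₂ : Finset (Fin (n + 1))) (h₁ : ω₁.Nonempty) (h₁' : ω₁ ≠ Finset.univ)
    (h₂ : ω₂.Nonempty) (h₂' : ω₂ ≠ Finset.univ)
    (hns₁ : ¬ω₁ ⊆ ω₂) (hns₂ : ¬ω₂ ⊆ ω₁)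
    (x y : Fin (n + 1) → ℝ) (hx : x ∈ permFacet n ω₁) (hy : y ∈ permFacet n ω₂) :
    ∑ i, (x i - ((n : ℝ) + 2) / 2) * (y i - ((n : ℝ) + 2) / 2) ≤
      (1 - 12 / ((n : ℝ) * ((n : ℝ) + 1) * ((n : ℝ) + 2))) *
        (Real.sqrt (∑ i, (x i - ((n : ℝ) + 2) / 2) ^ 2) *
          Real.sqrt (∑ i, (y i - ((n : ℝ) + 2) / 2) ^ 2)) := by
  obtain ⟨j, hj₁, hj₂⟩ := Finset.not_subset.1 hns₁
  obtain ⟨k, hk₂, hk₁⟩ := Finset.not_subset.1 hns₂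
  have hjk : j ≠ k := fun h => hj₂ (h ▸ hk₂)
  have hn1 : 1 ≤ n := by
    by_contra h
    push_neg at h
    interval_cases n
    · exact hjk (by omega)
  set c : ℝ := ((n : ℝ) + 2) / 2 with hc
  set ξ : Fin (n + 1) → ℝ := fun i => x i - c with hξ
  set η : Fin (n + 1) → ℝ := fun i => y i - c with hη
  set R2 : ℝ := (n : ℝ) * ((n : ℝ) + 1) * ((n : ℝ) + 2) / 12 with hR2
  have hxsep : x k + 1 ≤ x j := facet_sep hx hj₁ hk₁
  have hysep : y j + 1 ≤ y k := facet_sep hy hk₂ hj₂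
  have hA : ∑ i, ξ i ^ 2 ≤ R2 := perm_norm_bound n x hx.1
  have hB : ∑ i, η i ^ 2 ≤ R2 := perm_norm_bound n y hy.1
  set a : ℝ := Real.sqrt (∑ i, ξ i ^ 2) with ha
  set b : ℝ := Real.sqrt (∑ i, η i ^ 2) with hb
  have hR2nn : (0 : ℝ) ≤ R2 := by positivity
  have haR : a ≤ Real.sqrt R2 := Real.sqrt_le_sqrt hA
  have hbR : b ≤ Real.sqrt R2 := Real.sqrt_le_sqrt hB
  have hab : a * b ≤ R2 := by
    calc a * b ≤ Real.sqrt R2 * Real.sqrt R2 :=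
          mul_le_mul haR hbR (Real.sqrt_nonneg _) (Real.sqrt_nonneg _)
      _ = R2 := Real.mul_self_sqrt hR2nn
  -- swapped η
  set η' : Fin (n + 1) → ℝ := fun i => η (Equiv.swap j k i) with hη'
  have hη'sq : ∑ i, η' i ^ 2 = ∑ i, η i ^ 2 :=
    Equiv.sum_comp (Equiv.swap j k) (fun i => η i ^ 2)
  have hCS : ∑ i, ξ i * η' i ≤ a * b := by
    have := cs_sqrt ξ η'
    rwa [hη'sq] at this
  set P : ℝ := (ξ j - ξ k) * (η k - η j) with hP
  have hP1 : 1 ≤ P := by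
    have h1 : (1 : ℝ) ≤ ξ j - ξ k := by simp only [hξ]; linarith
    have h2 : (1 : ℝ) ≤ η k - η j := by simp only [hη]; linarith
    nlinarith
  have hshift : ∑ i, ξ i * η i = ∑ i, ξ i * η' i - P := by
    have hdiff : ∑ i, ξ i * η' i - ∑ i, ξ i * η i = ∑ i, ξ i * (η' i - η i) := by
      rw [← Finset.sum_sub_distrib]
      exact Finset.sum_congr rfl (fun i _ => by ring)
    have hsupp : ∑ i, ξ i * (η' i - η i) = ∑ i ∈ {j, k}, ξ i * (η' i - η i) := by
      symm
      apply Finset.sum_subset (Finset.subset_univ _)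
      intro i _ hi
      simp only [Finset.mem_insert, Finset.mem_singleton, not_or] at hi
      have : Equiv.swap j k i = i := Equiv.swap_apply_of_ne_of_ne hi.1 hi.2
      simp [hη', this]
    have hjk' : ∑ i ∈ {j, k}, ξ i * (η' i - η i)
        = ξ j * (η k - η j) + ξ k * (η j - η k) := by
      rw [Finset.sum_insert (by simpa using hjk), Finset.sum_singleton]
      simp [hη', Equiv.swap_apply_left, Equiv.swap_apply_right]
    have : ∑ i, ξ i * η' i - ∑ i, ξ i * η i = P := by
      rw [hdiff, hsupp, hjk', hP]; ring
    linarith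
  have hmain : ∑ i, ξ i * η i ≤ a * b - P := by
    rw [hshift]; linarith
  have hD : (0 : ℝ) < (n : ℝ) * ((n : ℝ) + 1) * ((n : ℝ) + 2) := by
    have : (1 : ℝ) ≤ (n : ℝ) := by exact_mod_cast hn1
    positivity
  have hfrac : 12 / ((n : ℝ) * ((n : ℝ) + 1) * ((n : ℝ) + 2)) * (a * b) ≤ 1 := by
    rw [div_mul_eq_mul_div, div_le_one hD]
    have : a * b ≤ (n : ℝ) * ((n : ℝ) + 1) * ((n : ℝ) + 2) / 12 := hab
    linarith
  have hfinal : ∑ i, ξ i * η i ≤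
      (1 - 12 / ((n : ℝ) * ((n : ℝ) + 1) * ((n : ℝ) + 2))) * (a * b) := by
    have hexp : (1 - 12 / ((n : ℝ) * ((n : ℝ) + 1) * ((n : ℝ) + 2))) * (a * b)
        = a * b - 12 / ((n : ℝ) * ((n : ℝ) + 1) * ((n : ℝ) + 2)) * (a * b) := by ring
    rw [hexp]
    linarith
  exact hfinal
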